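/- arXiv:2403.06541 — 7 statements merged into one kernel-verified Lean document; each statement's English description precedes it below -/
import Mathlib

section
/- Let T ≥ 0, δ ∈ (0,1), and M : [T,∞) → ℝ≥0 be C², with (M′(t))² ≤ δ M(t) M″(t) for all t ≥ T. Then M is non-increasing on [T,∞); in particular M(t) ≤ M(T) for all t ≥ T. -/
theorem stmt_0 (T δ : ℝ) (hT : 0 ≤ T) (hδ0 : 0 < δ) (hδ1 : δ < 1)
    (M : ℝ → ℝ) (hM : ContDiff ℝ 2 M)
    (hMnonneg : ∀ t, T ≤ t → 0 ≤ M t)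
    (hineq : ∀ t, T ≤ t → (deriv M t) ^ 2 ≤ δ * M t * deriv (deriv M) t) :
    (∀ s t, T ≤ s → s ≤ t → M t ≤ M s) ∧ (∀ t, T ≤ t → M t ≤ M T) := by
  have hd1 : Differentiable ℝ M := hM.differentiable two_ne_zero
  have h1 : ContDiff ℝ 1 (deriv M) :=
    ((contDiff_succ_iff_deriv (n := 1)).mp (by exact_mod_cast hM)).2.2
  have hd2 : Differentiable ℝ (deriv M) := h1.differentiable one_ne_zero
  have hc2 : Continuous (deriv (deriv M)) :=
    ((contDiff_succ_iff_deriv (n := 0)).mp (by exact_mod_cast h1)).2.2.continuous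
  -- Step 1: second derivative is nonnegative on [T, ∞)
  have hA : ∀ t, T ≤ t → 0 ≤ deriv (deriv M) t := by
    intro t ht
    by_contra h
    push_neg at h
    have hMt : 0 ≤ M t := hMnonneg t ht
    have hkey := hineq t ht
    have hrhs : δ * M t * deriv (deriv M) t ≤ 0 :=
      mul_nonpos_of_nonneg_of_nonpos (mul_nonneg hδ0.le hMt) h.le
    have hM'0 : deriv M t = 0 := by nlinarith [sq_nonneg (deriv M t)]
    have hM0 : M t = 0 := by
      by_contra h0
      have hpos : 0 < M t := lt_of_le_of_ne hMt (Ne.symm h0)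
      have : δ * M t * deriv (deriv M) t < 0 := mul_neg_of_pos_of_neg (mul_pos hδ0 hpos) h
      nlinarith [sq_nonneg (deriv M t)]
    -- get a neighborhood where M'' < 0
    have hcont : ContinuousAt (deriv (deriv M)) t := hc2.continuousAt
    obtain ⟨η, hη, hball⟩ := Metric.eventually_nhds_iff.mp
      (hcont.eventually_lt continuousAt_const h)
    have hta : t < t + η / 2 := by linarith
    have hneg : ∀ x ∈ Set.Icc t (t + η / 2), deriv (deriv M) x < 0 := by
      intro x hx
      apply hball
      rw [Real.dist_eq, abs_lt]
      have h1x := hx.1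
      have h2x := hx.2
      constructor <;> linarith
    -- M' strictly decreasing on [t, t+η/2]
    have hanti : StrictAntiOn (deriv M) (Set.Icc t (t + η / 2)) := by
      apply strictAntiOn_of_deriv_neg (convex_Icc _ _) (hd2.continuous.continuousOn)
      intro x hx
      exact hneg x (Set.mem_of_mem_of_subset hx (interior_subset))
    -- M' < 0 on (t, t+η/2]
    have hM'neg : ∀ x ∈ Set.Ioo t (t + η / 2), deriv M x < 0 := by
      intro x hx
      have := hanti (Set.left_mem_Icc.mpr hta.le) ⟨hx.1.le, hx.2.le⟩ hx.1
      rwa [hM'0] at this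
    -- M strictly decreasing on [t, t+η/2]
    have hManti : StrictAntiOn M (Set.Icc t (t + η / 2)) := by
      apply strictAntiOn_of_deriv_neg (convex_Icc _ _) (hd1.continuous.continuousOn)
      intro x hx
      rw [interior_Icc] at hx
      exact hM'neg x hx
    have hlt : M (t + η / 2) < M t :=
      hManti (Set.left_mem_Icc.mpr hta.le) (Set.right_mem_Icc.mpr hta.le) hta
    have hge : 0 ≤ M (t + η / 2) := hMnonneg _ (by linarith)
    linarith [hM0]
  -- Step 2: M' is monotone on [T, ∞)
  have hM'mono : MonotoneOn (deriv M) (Set.Ici T) := by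
    apply monotoneOn_of_deriv_nonneg (convex_Ici T) (hd2.continuous.continuousOn)
      (hd2.differentiableOn)
    intro x hx
    rw [interior_Ici] at hx
    exact hA x (le_of_lt hx)
  -- Step 3: M' ≤ 0 on [T, ∞)
  have hM'le : ∀ t, T ≤ t → deriv M t ≤ 0 := by
    intro t₀ ht₀
    by_contra h
    push_neg at h
    -- M' ≥ M' t₀ on [t₀, ∞)
    have hM'c : ∀ t, t₀ ≤ t → deriv M t₀ ≤ deriv M t := fun t ht =>
      hM'mono (Set.mem_Ici.mpr ht₀) (Set.mem_Ici.mpr (le_trans ht₀ ht)) ht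
    have hM'pos : ∀ t, t₀ ≤ t → 0 < deriv M t := fun t ht => lt_of_lt_of_le h (hM'c t ht)
    -- M t₀ > 0
    have hMt₀pos : 0 < M t₀ := by
      have hq := hineq t₀ ht₀
      have h2 := hMnonneg t₀ ht₀
      rcases eq_or_lt_of_le h2 with hz | hp
      · exfalso
        rw [← hz] at hq
        simp only [mul_zero, zero_mul] at hq
        nlinarith [h]
      · exact hp
    -- M monotone on [t₀, ∞), so M ≥ M t₀ > 0
    have hMmono : MonotoneOn M (Set.Ici t₀) := by
      apply monotoneOn_of_deriv_nonneg (convex_Ici t₀) (hd1.continuous.continuousOn)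
        (hd1.differentiableOn)
      intro x hx
      rw [interior_Ici] at hx
      exact (hM'pos x hx.le).le
    have hMpos : ∀ t, t₀ ≤ t → 0 < M t := fun t ht =>
      lt_of_lt_of_le hMt₀pos (hMmono (Set.self_mem_Ici) (Set.mem_Ici.mpr ht) ht)
    -- consider g = M / M' + ε * t with ε = 1/δ - 1 > 0
    set ε := 1 / δ - 1 with hε
    have hεpos : 0 < ε := by
      rw [hε, sub_pos, lt_div_iff₀ hδ0]
      linarith
    clear_value ε
    set g : ℝ → ℝ := fun t => M t / deriv M t + ε * t with hg
    have hgdiff : ∀ t, t₀ ≤ t → HasDerivAt g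
        ((deriv M t * deriv M t - M t * deriv (deriv M) t) / (deriv M t) ^ 2 + ε) t := by
      intro t ht
      have hh1 : HasDerivAt M (deriv M t) t := (hd1 t).hasDerivAt
      have hh2 : HasDerivAt (deriv M) (deriv (deriv M) t) t := (hd2 t).hasDerivAt
      have hh3 := hh1.div hh2 (ne_of_gt (hM'pos t ht))
      have hh4 : HasDerivAt (fun t : ℝ => ε * t) ε t := by
        simpa using (hasDerivAt_id t).const_mul ε
      exact hh3.add hh4
    have hganti : AntitoneOn g (Set.Ici t₀) := by
      apply antitoneOn_of_deriv_nonpos (convex_Ici t₀)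
      · exact ContinuousOn.add
          ((hd1.continuous.continuousOn).div (hd2.continuous.continuousOn)
            (fun x hx => ne_of_gt (hM'pos x hx)))
          (continuous_const.mul continuous_id).continuousOn
      · intro x hx
        rw [interior_Ici] at hx
        exact (hgdiff x hx.le).differentiableAt.differentiableWithinAt
      · intro x hx
        rw [interior_Ici] at hx
        rw [(hgdiff x hx.le).deriv]
        have hx' : t₀ ≤ x := hx.le
        have hxT : T ≤ x := le_trans ht₀ hx'
        have hiq := hineq x hxT
        have hmp := hM'pos x hx'
        have hsq : 0 < (deriv M x) ^ 2 := by positivity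
        rw [div_add' _ _ _ (ne_of_gt hsq), div_nonpos_iff]
        right
        refine ⟨?_, hsq.le⟩
        have hcalc : deriv M x * deriv M x + ε * deriv M x ^ 2 = 1 / δ * deriv M x ^ 2 := by
          rw [hε]; ring
        have h6 : 1 / δ * deriv M x ^ 2 ≤ M x * deriv (deriv M) x := by
          rw [div_mul_eq_mul_div, one_mul, div_le_iff₀ hδ0]
          nlinarith [hiq]
        linarith [hcalc, h6]
    -- contradiction: evaluate at large t₁
    obtain ⟨t₁, ht₁ge, ht₁gt⟩ :
        ∃ t₁, t₀ ≤ t₁ ∧ M t₀ / deriv M t₀ < ε * t₁ - ε * t₀ := by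
      refine ⟨t₀ + (M t₀ / deriv M t₀ + 1) / ε, ?_, ?_⟩
      · have h0 : 0 ≤ M t₀ / deriv M t₀ := (div_pos hMt₀pos h).le
        have h0' : 0 ≤ (M t₀ / deriv M t₀ + 1) / ε := div_nonneg (by linarith) hεpos.le
        linarith
      · have hcancel : ε * (t₀ + (M t₀ / deriv M t₀ + 1) / ε) - ε * t₀
            = M t₀ / deriv M t₀ + 1 := by
          field_simp
          ring
        rw [hcancel]
        linarith
    have hgle : g t₁ ≤ g t₀ := hganti Set.self_mem_Ici (Set.mem_Ici.mpr ht₁ge) ht₁ge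
    have hvpos : 0 < M t₁ / deriv M t₁ := div_pos (hMpos t₁ ht₁ge) (hM'pos t₁ ht₁ge)
    simp only [hg] at hgle
    linarith
  -- Step 4: conclude
  have hManti : AntitoneOn M (Set.Ici T) := by
    apply antitoneOn_of_deriv_nonpos (convex_Ici T) (hd1.continuous.continuousOn)
      (hd1.differentiableOn)
    intro x hx
    rw [interior_Ici] at hx
    exact hM'le x hx.le
  constructor
  · intro s t hs hst
    exact hManti (Set.mem_Ici.mpr hs) (Set.mem_Ici.mpr (le_trans hs hst)) hst
  · intro t ht
    exact hManti Set.self_mem_Ici (Set.mem_Ici.mpr ht) ht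
end

section
/- Let C > 0 and M₀ : [0,∞) → ℝ be C² with M₀″(t) ≥ C·M₀(t) for all t ≥ 0. Then either M₀(t) → +∞ as t → +∞, or M₀(t) ≤ M₀(0)·e^{−√C·t} for all t ≥ 0. -/
open Real Filter

lemma expmul_hasDerivAt (a : ℝ) (f : ℝ → ℝ) (hf : Differentiable ℝ f) (t : ℝ) :
    HasDerivAt (fun t => Real.exp (a*t) * f t)
      (Real.exp (a*t) * (a * f t + deriv f t)) t := by
  have h1 : HasDerivAt (fun t : ℝ => a * t) a t := by
    simpa using (hasDerivAt_id t).const_mul a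
  have h2 := h1.exp
  have h3 := h2.fun_mul (hf t).hasDerivAt
  exact h3.congr_deriv (by ring)

theorem stmt_1 (C : ℝ) (hC : 0 < C) (M₀ : ℝ → ℝ) (hM : ContDiff ℝ 2 M₀)
    (hineq : ∀ t, 0 ≤ t → C * M₀ t ≤ deriv (deriv M₀) t) :
    (Filter.Tendsto M₀ Filter.atTop Filter.atTop) ∨
      (∀ t, 0 ≤ t → M₀ t ≤ M₀ 0 * Real.exp (-Real.sqrt C * t)) := by
  set r := Real.sqrt C with hrdef
  have hr : 0 < r := Real.sqrt_pos.mpr hC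
  have hC' : r * r = C := Real.mul_self_sqrt hC.le
  have hM1 : Differentiable ℝ M₀ := hM.differentiable (by norm_num)
  have hMd : ContDiff ℝ 1 (deriv M₀) := by
    have h := contDiff_succ_iff_deriv.mp (show ContDiff ℝ (1+1) M₀ by exact_mod_cast hM)
    exact h.2.2
  have hM2 : Differentiable ℝ (deriv M₀) := hMd.differentiable (by norm_num)
  set v : ℝ → ℝ := fun t => deriv M₀ t + r * M₀ t with hv
  have hvdiff : Differentiable ℝ v := hM2.add (hM1.const_mul r)
  have hvderiv : ∀ t, deriv v t = deriv (deriv M₀) t + r * deriv M₀ t := by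
    intro t
    rw [hv]
    rw [deriv_fun_add (hM2 t) ((hM1 t).const_mul r), deriv_const_mul r (hM1 t)]
  have key : ∀ t, 0 ≤ t → r * v t ≤ deriv v t := by
    intro t ht
    rw [hvderiv t]
    have h := hineq t ht
    simp only [hv]
    have h2 : r * (deriv M₀ t + r * M₀ t) = r * deriv M₀ t + C * M₀ t := by
      rw [← hC']; ring
    linarith
  by_cases hpos : ∃ t, 0 ≤ t ∧ 0 < v t
  · left
    obtain ⟨t₀, ht₀, hvt₀⟩ := hpos
    -- u = e^{-rt} v is monotone on [0,∞)
    have hu : MonotoneOn (fun t => Real.exp (-r*t) * v t) (Set.Ici 0) := by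
      apply monotoneOn_of_deriv_nonneg (convex_Ici 0)
      · exact Continuous.continuousOn (by fun_prop)
      · intro x hx
        exact ((expmul_hasDerivAt (-r) v hvdiff x).differentiableAt).differentiableWithinAt
      · intro x hx
        rw [interior_Ici] at hx
        rw [(expmul_hasDerivAt (-r) v hvdiff x).deriv]
        have hk := key x (le_of_lt hx)
        have : 0 ≤ -r * v x + deriv v x := by linarith
        positivity
    set c : ℝ := Real.exp (-r*t₀) * v t₀ with hcdef
    have hc : 0 < c := mul_pos (Real.exp_pos _) hvt₀
    have hvlb : ∀ t, t₀ ≤ t → c * Real.exp (r*t) ≤ v t := by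
      intro t ht
      have h1 : c ≤ Real.exp (-r*t) * v t :=
        hu (Set.mem_Ici.mpr ht₀) (Set.mem_Ici.mpr (ht₀.trans ht)) ht
      have h2 : Real.exp (-r*t) = (Real.exp (r*t))⁻¹ := by
        rw [← Real.exp_neg]; ring_nf
      rw [h2] at h1
      have he : 0 < Real.exp (r*t) := Real.exp_pos _
      calc c * Real.exp (r*t) ≤ ((Real.exp (r*t))⁻¹ * v t) * Real.exp (r*t) := by
            exact mul_le_mul_of_nonneg_right h1 he.le
        _ = v t := by field_simp
    -- h = e^{rt} M₀ - (c/(2r)) e^{2rt} monotone on [t₀,∞)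
    set k : ℝ := c / (2*r) with hkdef
    have hk : 0 < k := div_pos hc (by linarith)
    have hh : MonotoneOn (fun t => Real.exp (r*t) * M₀ t - k * Real.exp (2*r*t)) (Set.Ici t₀) := by
      apply monotoneOn_of_deriv_nonneg (convex_Ici t₀)
      · exact Continuous.continuousOn (by fun_prop)
      · intro x hx
        have h1 := (expmul_hasDerivAt r M₀ hM1 x).differentiableAt
        have h2 : DifferentiableAt ℝ (fun t => k * Real.exp (2*r*t)) x := by
          apply DifferentiableAt.const_mul
          exact (Real.differentiable_exp.comp ((differentiable_id.const_mul (2*r)))) x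
        exact (h1.sub h2).differentiableWithinAt
      · intro x hx
        rw [interior_Ici] at hx
        have hd1 := expmul_hasDerivAt r M₀ hM1 x
        have hd2 : HasDerivAt (fun t => k * Real.exp (2*r*t)) (k * (Real.exp (2*r*x) * (2*r))) x := by
          have : HasDerivAt (fun t : ℝ => 2*r*t) (2*r) x := by
            simpa using (hasDerivAt_id x).const_mul (2*r)
          exact (this.exp).const_mul k
        rw [(hd1.fun_sub hd2).deriv]
        have hvx : c * Real.exp (r*x) ≤ v x := hvlb x hx.le
        have hvx' : Real.exp (r*x) * v x ≥ c * (Real.exp (r*x) * Real.exp (r*x)) := by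
          nlinarith [Real.exp_pos (r*x)]
        have hexp2 : Real.exp (r*x) * Real.exp (r*x) = Real.exp (2*r*x) := by
          rw [← Real.exp_add]; ring_nf
      -- deriv = exp(rx)*(r M₀ x + deriv M₀ x) - k*exp(2rx)*2r
      --       = exp(rx)*v x - c*exp(2rx) ≥ 0
        have hkc : k * (2*r) = c := by
          rw [hkdef]; field_simp
        have : Real.exp (r*x) * (r * M₀ x + deriv M₀ x) = Real.exp (r*x) * v x := by
          simp only [hv]; ring
        rw [this]
        rw [hexp2] at hvx'
        nlinarith [hvx', hkc]
    -- lower bound for M₀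
    set b : ℝ := Real.exp (r*t₀) * M₀ t₀ - k * Real.exp (2*r*t₀) with hbdef
    have hlb : ∀ t, t₀ ≤ t → -|b| + k * Real.exp (r*t) ≤ M₀ t := by
      intro t ht
      have h1 : b ≤ Real.exp (r*t) * M₀ t - k * Real.exp (2*r*t) :=
        hh (Set.mem_Ici.mpr le_rfl) (Set.mem_Ici.mpr ht) ht
      have he : 0 < Real.exp (r*t) := Real.exp_pos _
      have hexp2 : Real.exp (2*r*t) = Real.exp (r*t) * Real.exp (r*t) := by
        rw [← Real.exp_add]; ring_nf
      -- M₀ t ≥ (b + k e^{2rt})/e^{rt} = b e^{-rt} + k e^{rt}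
      have h2 : b + k * (Real.exp (r*t) * Real.exp (r*t)) ≤ Real.exp (r*t) * M₀ t := by
        rw [hexp2] at h1; linarith
      have h3 : -|b| * Real.exp (r*t) + k * (Real.exp (r*t) * Real.exp (r*t)) ≤
          Real.exp (r*t) * M₀ t := by
        have htnn : 0 ≤ t := ht₀.trans ht
        have hge1 : (1:ℝ) ≤ Real.exp (r*t) := Real.one_le_exp (by positivity)
        have h4 : -|b| ≤ b := neg_abs_le b
        have h5 : -|b| ≤ 0 := neg_nonpos.mpr (abs_nonneg b)
        nlinarith [hge1, h4, h5]
      nlinarith [h3, he]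
    have hF : Tendsto (fun t => -|b| + k * Real.exp (r*t)) atTop atTop := by
      apply tendsto_atTop_add_const_left
      exact (Real.tendsto_exp_atTop.comp (tendsto_id.const_mul_atTop hr)).const_mul_atTop hk
    refine tendsto_atTop_mono' atTop ?_ hF
    filter_upwards [eventually_ge_atTop t₀] with t ht
    exact hlb t ht
  · right
    push_neg at hpos
    intro t ht
    have hg : AntitoneOn (fun t => Real.exp (r*t) * M₀ t) (Set.Ici 0) := by
      apply antitoneOn_of_deriv_nonpos (convex_Ici 0)
      · exact Continuous.continuousOn (by fun_prop)
      · intro x hx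
        exact ((expmul_hasDerivAt r M₀ hM1 x).differentiableAt).differentiableWithinAt
      · intro x hx
        rw [interior_Ici] at hx
        rw [(expmul_hasDerivAt r M₀ hM1 x).deriv]
        have hvx : v x ≤ 0 := hpos x hx.le
        have : r * M₀ x + deriv M₀ x = v x := by simp only [hv]; ring
        rw [this]
        exact mul_nonpos_of_nonneg_of_nonpos (Real.exp_pos _).le hvx
    have h1 : Real.exp (r*t) * M₀ t ≤ M₀ 0 := by
      have := hg (Set.mem_Ici.mpr le_rfl) (Set.mem_Ici.mpr ht) ht
      simpa using this
    have he : 0 < Real.exp (r*t) := Real.exp_pos _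
    have h2 : Real.exp (-r*t) = (Real.exp (r*t))⁻¹ := by
      rw [← Real.exp_neg]; ring_nf
    rw [h2]
    calc M₀ t = (Real.exp (r*t) * M₀ t) * (Real.exp (r*t))⁻¹ := by field_simp
      _ ≤ M₀ 0 * (Real.exp (r*t))⁻¹ := by
          apply mul_le_mul_of_nonneg_right h1
          positivity
end

section
/- Let T₀ ≥ 0, δ ∈ (0,1), and M : [T₀,∞) → ℝ be C² with M(T₀) > 0, M′(T₀) > 0, and (M′(t))² ≤ δ M(t) M″(t) whenever M ≥ 0 on [T₀,t]. Then M(t) > 0 for all t ≥ T₀ and M′(t) ≥ M′(T₀) for all t ≥ T₀. -/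
theorem stmt_5 (T₀ δ : ℝ) (hT₀ : 0 ≤ T₀) (hδ0 : 0 < δ) (hδ1 : δ < 1)
    (M : ℝ → ℝ) (hM : ContDiff ℝ 2 M)
    (hMT₀ : 0 < M T₀) (hM'T₀ : 0 < deriv M T₀)
    (hineq : ∀ t, T₀ ≤ t → (∀ s ∈ Set.Icc T₀ t, 0 ≤ M s) →
      (deriv M t) ^ 2 ≤ δ * M t * deriv (deriv M) t) :
    ∀ t, T₀ ≤ t → 0 < M t ∧ deriv M T₀ ≤ deriv M t := by
  have hMc : Continuous M := hM.continuous
  have hMd : Differentiable ℝ M := hM.differentiable (by norm_num)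
  have hM1 : ContDiff ℝ 1 (deriv M) := by
    have : ContDiff ℝ ((1 : ℕ) + 1) M := by exact_mod_cast hM
    exact (contDiff_succ_iff_deriv.mp this).2.2
  have hM'c : Continuous (deriv M) := hM1.continuous
  have hM'd : Differentiable ℝ (deriv M) := hM1.differentiable (by norm_num)
  -- key lemma
  have key : ∀ t, T₀ ≤ t → (∀ s ∈ Set.Icc T₀ t, 0 ≤ M s) →
      (∀ s ∈ Set.Ico T₀ t, 0 < M s) → MonotoneOn (deriv M) (Set.Icc T₀ t) := by
    intro t ht hnn hpos
    apply monotoneOn_of_deriv_nonneg (convex_Icc _ _) hM'c.continuousOn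
      (fun s _ => (hM'd s).differentiableWithinAt)
    intro s hs
    rw [interior_Icc] at hs
    have hsp : 0 < M s := hpos s ⟨hs.1.le, hs.2⟩
    have h := hineq s hs.1.le (fun u hu => hnn u ⟨hu.1, hu.2.trans hs.2.le⟩)
    nlinarith [mul_pos hδ0 hsp, sq_nonneg (deriv M s)]
  -- positivity on Icc
  have pos : ∀ t, T₀ ≤ t → ∀ s ∈ Set.Icc T₀ t, 0 < M s := by
    intro t ht
    by_contra hcon
    push_neg at hcon
    set B := {s | s ∈ Set.Icc T₀ t ∧ M s ≤ 0} with hB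
    have hBne : B.Nonempty := by
      obtain ⟨s, hs1, hs2⟩ := hcon; exact ⟨s, hs1, hs2⟩
    have hBbdd : BddBelow B := ⟨T₀, fun s hs => hs.1.1⟩
    have hBcl : IsClosed B := (isClosed_Icc.inter (isClosed_le hMc continuous_const))
    set c := sInf B with hc
    have hcB : c ∈ B := hBcl.csInf_mem hBne hBbdd
    have hcT : T₀ ≤ c := hcB.1.1
    have hcT' : T₀ < c := by
      rcases lt_or_eq_of_le hcT with h | h
      · exact h
      · exact absurd hcB.2 (by rw [← h]; linarith)
    have hIco : ∀ s ∈ Set.Ico T₀ c, 0 < M s := by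
      intro s hs
      by_contra hns
      push_neg at hns
      have : s ∈ B := ⟨⟨hs.1, hs.2.le.trans hcB.1.2⟩, hns⟩
      exact absurd (csInf_le hBbdd this) (not_le.mpr hs.2)
    have hMc0 : 0 ≤ M c := by
      have htend : Filter.Tendsto M (nhdsWithin c (Set.Iio c)) (nhds (M c)) :=
        (hMc.tendsto c).mono_left nhdsWithin_le_nhds
      refine ge_of_tendsto htend ?_
      filter_upwards [Ioo_mem_nhdsLT_of_mem ⟨hcT', le_rfl⟩] with s hs
      exact (hIco s ⟨hs.1.le, hs.2⟩).le
    have hnn : ∀ s ∈ Set.Icc T₀ c, 0 ≤ M s := by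
      intro s hs
      rcases eq_or_lt_of_le hs.2 with h | h
      · rw [h]; exact hMc0
      · exact (hIco s ⟨hs.1, h⟩).le
    have hmono := key c hcT hnn hIco
    have hder : ∀ s ∈ Set.Icc T₀ c, 0 < deriv M s := by
      intro s hs
      have := hmono (Set.left_mem_Icc.mpr hcT) hs hs.1
      linarith
    have hstrict : StrictMonoOn M (Set.Icc T₀ c) := by
      apply strictMonoOn_of_deriv_pos (convex_Icc _ _) hMc.continuousOn
      intro s hs
      rw [interior_Icc] at hs
      exact hder s ⟨hs.1.le, hs.2.le⟩
    have : M T₀ < M c := hstrict (Set.left_mem_Icc.mpr hcT) (Set.right_mem_Icc.mpr hcT) hcT'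
    linarith [hcB.2]
  intro t ht
  have hpos := pos t ht
  have hmono := key t ht (fun s hs => (hpos s hs).le) (fun s hs => hpos s ⟨hs.1, hs.2.le⟩)
  exact ⟨hpos t (Set.right_mem_Icc.mpr ht),
    hmono (Set.left_mem_Icc.mpr ht) (Set.right_mem_Icc.mpr ht) ht⟩
end

section
/- Let δ ∈ (0,1), T₀ ≥ 0, and M : [T₀,∞) → (0,∞) be C² with M′(T₀) > 0 and (M′(t))² ≤ δ M(t) M″(t) for all t ≥ T₀. Then for all t ≥ T₀: (t − T₀)·M′(T₀)/M(T₀)^{1/δ} ≤ (1/δ − 1)^{-1}·(M(T₀)^{1−1/δ} − M(t)^{1−1/δ}). -/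
open Real Set

theorem stmt_6 (T₀ δ : ℝ) (hT₀ : 0 ≤ T₀) (hδ0 : 0 < δ) (hδ1 : δ < 1)
    (M : ℝ → ℝ) (hM : ContDiff ℝ 2 M)
    (hMpos : ∀ t, T₀ ≤ t → 0 < M t) (hM'T₀ : 0 < deriv M T₀)
    (hineq : ∀ t, T₀ ≤ t → (deriv M t) ^ 2 ≤ δ * M t * deriv (deriv M) t) :
    ∀ t, T₀ ≤ t →
      (t - T₀) * deriv M T₀ / (M T₀) ^ (1 / δ) ≤
        (1 / δ - 1)⁻¹ * ((M T₀) ^ (1 - 1 / δ) - (M t) ^ (1 - 1 / δ)) := by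
  have hMd : Differentiable ℝ M := hM.differentiable (by norm_num)
  have hM2 : ContDiff ℝ ((1 : ℕ) + 1) M := by exact_mod_cast hM
  have hM'cd : ContDiff ℝ (1 : ℕ) (deriv M) := (contDiff_succ_iff_deriv.mp hM2).2.2
  have hM'd : Differentiable ℝ (deriv M) := hM'cd.differentiable (by norm_num)
  have hδ0' : (0:ℝ) < 1/δ := by positivity
  set G : ℝ → ℝ := fun t => deriv M t * M t ^ (-(1/δ)) with hG
  have hGderiv : ∀ x, T₀ ≤ x → HasDerivAt G
      (deriv (deriv M) x * M x ^ (-(1/δ)) +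
        deriv M x * (deriv M x * (-(1/δ)) * M x ^ (-(1/δ) - 1))) x := by
    intro x hx
    exact (hM'd x).hasDerivAt.mul
      (((hMd x).hasDerivAt).rpow_const (Or.inl (hMpos x hx).ne'))
  have hGmono : MonotoneOn G (Ici T₀) := by
    apply monotoneOn_of_deriv_nonneg (convex_Ici T₀)
    · intro x hx
      exact ((hGderiv x hx).continuousAt).continuousWithinAt
    · intro x hx
      rw [interior_Ici] at hx
      exact ((hGderiv x (le_of_lt hx)).differentiableAt).differentiableWithinAt
    · intro x hx
      rw [interior_Ici] at hx
      have hx' : T₀ ≤ x := le_of_lt hx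
      have hMx := hMpos x hx'
      rw [(hGderiv x hx').deriv]
      have key : 0 ≤ deriv (deriv M) x * M x - (1/δ) * (deriv M x)^2 := by
        have h1 := hineq x hx'
        have h2 : (1/δ) * (deriv M x)^2 ≤ (1/δ) * (δ * M x * deriv (deriv M) x) := by
          apply mul_le_mul_of_nonneg_left h1 (le_of_lt hδ0')
        have h3 : (1/δ) * (δ * M x * deriv (deriv M) x) = M x * deriv (deriv M) x := by
          field_simp
        linarith [h2, h3 ▸ h2]
      have hpow : M x ^ (-(1/δ)) = M x ^ (-(1/δ) - 1) * M x := by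
        rw [← Real.rpow_add_one hMx.ne' (-(1/δ) - 1)]
        ring_nf
      rw [hpow]
      have hpw : (0:ℝ) ≤ M x ^ (-(1/δ) - 1) := (Real.rpow_pos_of_pos hMx _).le
      nlinarith [mul_nonneg hpw key]
  set c : ℝ := deriv M T₀ * M T₀ ^ (-(1/δ)) with hc
  set F : ℝ → ℝ := fun t =>
    (1/δ - 1)⁻¹ * (M T₀ ^ (1 - 1/δ) - M t ^ (1 - 1/δ)) - (t - T₀) * c with hF
  have hFderiv : ∀ x, T₀ ≤ x → HasDerivAt F
      ((1/δ - 1)⁻¹ * (0 - deriv M x * (1 - 1/δ) * M x ^ (1 - 1/δ - 1)) - 1 * c) x := by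
    intro x hx
    have h1 : HasDerivAt (fun t => M t ^ (1 - 1/δ))
        (deriv M x * (1 - 1/δ) * M x ^ (1 - 1/δ - 1)) x :=
      ((hMd x).hasDerivAt).rpow_const (Or.inl (hMpos x hx).ne')
    have h2 : HasDerivAt (fun t => M T₀ ^ (1 - 1/δ) - M t ^ (1 - 1/δ))
        (0 - deriv M x * (1 - 1/δ) * M x ^ (1 - 1/δ - 1)) x :=
      (hasDerivAt_const x _).sub h1
    have h3 : HasDerivAt (fun t : ℝ => (t - T₀) * c) (1 * c) x :=
      ((hasDerivAt_id x).sub_const T₀).mul_const c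
    exact (h2.const_mul _).sub h3
  have hFd_eq : ∀ x, T₀ ≤ x →
      (1/δ - 1)⁻¹ * (0 - deriv M x * (1 - 1/δ) * M x ^ (1 - 1/δ - 1)) - 1 * c
        = G x - c := by
    intro x hx
    have hne : (1/δ - 1) ≠ 0 := by
      have : (1:ℝ) < 1/δ := by
        rw [lt_div_iff₀ hδ0]; linarith
      linarith
    have he : (1 : ℝ) - 1/δ - 1 = -(1/δ) := by ring
    rw [he]
    rw [show (1/δ - 1)⁻¹ * (0 - deriv M x * (1 - 1/δ) * M x ^ (-(1/δ))) - 1 * c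
      = ((1/δ - 1)⁻¹ * (1/δ - 1)) * (deriv M x * M x ^ (-(1/δ))) - c from by ring,
      inv_mul_cancel₀ hne, one_mul]
  have hFmono : MonotoneOn F (Ici T₀) := by
    apply monotoneOn_of_deriv_nonneg (convex_Ici T₀)
    · intro x hx
      exact ((hFderiv x hx).continuousAt).continuousWithinAt
    · intro x hx
      rw [interior_Ici] at hx
      exact ((hFderiv x (le_of_lt hx)).differentiableAt).differentiableWithinAt
    · intro x hx
      rw [interior_Ici] at hx
      have hx' : T₀ ≤ x := le_of_lt hx
      rw [(hFderiv x hx').deriv, hFd_eq x hx']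
      have := hGmono (self_mem_Ici) hx' hx'
      have hGT : G T₀ = c := rfl
      linarith [hGmono (self_mem_Ici (a := T₀)) (mem_Ici.mpr hx') hx']
  intro t ht
  have hFt : F T₀ ≤ F t := hFmono self_mem_Ici (mem_Ici.mpr ht) ht
  have hFT0 : F T₀ = 0 := by simp [hF]
  have hgoal : (t - T₀) * c ≤ (1/δ - 1)⁻¹ * (M T₀ ^ (1 - 1/δ) - M t ^ (1 - 1/δ)) := by
    rw [hFT0] at hFt
    simp only [hF] at hFt
    linarith
  have hrw : (t - T₀) * deriv M T₀ / (M T₀) ^ (1/δ) = (t - T₀) * c := by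
    rw [hc, Real.rpow_neg (le_of_lt (hMpos T₀ le_rfl))]
    field_simp
  rw [hrw]
  exact hgoal
end

section
/- Let δ ∈ (0,1) and suppose M : [T₀,∞) → (0,∞) is C² with M′(T₀) > 0 and (M′(t))² ≤ δ M(t) M″(t) for all t ≥ T₀. Then no such M exists; i.e., the hypotheses are contradictory. -/
theorem stmt_7 (T₀ δ : ℝ) (hδ0 : 0 < δ) (hδ1 : δ < 1)
    (M : ℝ → ℝ) (hM : ContDiff ℝ 2 M)
    (hMpos : ∀ t, T₀ ≤ t → 0 < M t) (hM'T₀ : 0 < deriv M T₀)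
    (hineq : ∀ t, T₀ ≤ t → (deriv M t) ^ 2 ≤ δ * M t * deriv (deriv M) t) :
    False := by
  have hM2 : ContDiff ℝ ((1 : ℕ) + 1) M := by exact_mod_cast hM
  have hdM : Differentiable ℝ M := hM.differentiable (by norm_num)
  have hdM' : Differentiable ℝ (deriv M) :=
    (contDiff_succ_iff_deriv.mp hM2).2.2.differentiable (by norm_num)
  -- M'' ≥ 0 on [T₀,∞)
  have hM''nonneg : ∀ t, T₀ ≤ t → 0 ≤ deriv (deriv M) t := by
    intro t ht
    by_contra hc
    push_neg at hc
    have h1 := mul_neg_of_pos_of_neg (mul_pos hδ0 (hMpos t ht)) hc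
    nlinarith [sq_nonneg (deriv M t), hineq t ht]
  -- M' monotone on [T₀,∞)
  have hmono : MonotoneOn (deriv M) (Set.Ici T₀) := by
    apply monotoneOn_of_deriv_nonneg (convex_Ici T₀) (hdM'.continuous.continuousOn)
      (fun t _ => (hdM' t).differentiableWithinAt)
    intro t ht
    exact hM''nonneg t (le_of_lt (by simpa using ht))
  have hM'pos : ∀ t, T₀ ≤ t → 0 < deriv M t := fun t ht =>
    lt_of_lt_of_le hM'T₀ (hmono (Set.self_mem_Ici) ht ht)
  have hεpos : 0 < 1 / δ - 1 := sub_pos.mpr ((one_lt_div hδ0).mpr hδ1)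
  set g : ℝ → ℝ := fun t => M t / deriv M t + (1 / δ - 1) * t with hg
  -- g has derivative ≤ 0 on [T₀,∞)
  have hderiv : ∀ t, T₀ ≤ t → HasDerivAt g
      ((deriv M t * deriv M t - M t * deriv (deriv M) t) / (deriv M t) ^ 2 + (1 / δ - 1) * 1) t := by
    intro t ht
    exact ((hdM t).hasDerivAt.div (hdM' t).hasDerivAt (ne_of_gt (hM'pos t ht))).add
      ((hasDerivAt_id t).const_mul (1 / δ - 1))
  have hderiv_nonpos : ∀ t, T₀ ≤ t →
      (deriv M t * deriv M t - M t * deriv (deriv M) t) / (deriv M t) ^ 2 + (1 / δ - 1) * 1 ≤ 0 := by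
    intro t ht
    have h1 := hineq t ht
    have h2 := hMpos t ht
    have h3 := hM'pos t ht
    have key : deriv M t ^ 2 / δ ≤ M t * deriv (deriv M) t :=
      (div_le_iff₀ hδ0).mpr (by linarith)
    rw [mul_one, div_add' _ _ _ (by positivity), div_nonpos_iff]
    right
    refine ⟨?_, by positivity⟩
    have hδinv : (1 / δ - 1) * deriv M t ^ 2 = deriv M t ^ 2 / δ - deriv M t ^ 2 := by
      field_simp
    nlinarith [key, hδinv]
  have hanti : AntitoneOn g (Set.Ici T₀) := by
    apply antitoneOn_of_deriv_nonpos (convex_Ici T₀)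
    · intro t ht
      exact (hderiv t ht).continuousAt.continuousWithinAt
    · intro t ht
      have ht' : T₀ ≤ t := le_of_lt (by simpa using ht)
      exact (hderiv t ht').differentiableAt.differentiableWithinAt
    · intro t ht
      have ht' : T₀ ≤ t := le_of_lt (by simpa using ht)
      rw [(hderiv t ht').deriv]
      exact hderiv_nonpos t ht'
  -- choose large time
  set t₁ : ℝ := T₀ + (M T₀ / deriv M T₀ + 1) / (1 / δ - 1) with ht₁
  have hgT₀pos : 0 < M T₀ / deriv M T₀ := div_pos (hMpos T₀ le_rfl) hM'T₀
  have ht₁ge : T₀ ≤ t₁ := by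
    have h : 0 ≤ (M T₀ / deriv M T₀ + 1) / (1 / δ - 1) := by positivity
    rw [ht₁]; linarith
  have hle := hanti (Set.self_mem_Ici) ht₁ge ht₁ge
  have hgt₁pos : 0 < M t₁ / deriv M t₁ := div_pos (hMpos t₁ ht₁ge) (hM'pos t₁ ht₁ge)
  have hεt : (1 / δ - 1) * t₁ = (1 / δ - 1) * T₀ + (M T₀ / deriv M T₀ + 1) := by
    rw [ht₁, mul_add, mul_comm (1 / δ - 1) ((M T₀ / deriv M T₀ + 1) / (1 / δ - 1)),
      div_mul_cancel₀ _ (ne_of_gt hεpos)]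
  simp only [hg] at hle
  rw [hεt] at hle
  linarith
end

section
/- Let C₂, C₃ > 0 and M : [0,∞) → ℝ be C², bounded above, with |M′(t)| ≤ C₂ M″(t) + C₃ for all t ≥ 0. Then M′(t) ≤ C₃ for all t ≥ 0. -/
theorem stmt_10 (C₂ C₃ : ℝ) (hC₂ : 0 < C₂) (hC₃ : 0 < C₃)
    (M : ℝ → ℝ) (hM : ContDiff ℝ 2 M)
    (hbdd : ∃ B, ∀ t, 0 ≤ t → M t ≤ B)
    (hineq : ∀ t, 0 ≤ t → |deriv M t| ≤ C₂ * deriv (deriv M) t + C₃) :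
    ∀ t, 0 ≤ t → deriv M t ≤ C₃ := by
  obtain ⟨B, hB⟩ := hbdd
  have hM2 : ContDiff ℝ ((1 : WithTop ℕ∞) + 1) M := by norm_num; exact hM
  have hiff := contDiff_succ_iff_deriv.mp hM2
  have hMd : Differentiable ℝ M := hiff.1
  have hf : Differentiable ℝ (deriv M) := hiff.2.2.differentiable one_ne_zero
  have hfc : Continuous (deriv M) := hf.continuous
  by_contra h
  push_neg at h
  obtain ⟨t₀, ht₀, hgt⟩ := h
  -- Step 1: deriv M t > C₃ for all t ≥ t₀
  have step1 : ∀ t, t₀ ≤ t → C₃ < deriv M t := by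
    by_contra hc
    push_neg at hc
    obtain ⟨t₂, ht₂, hle⟩ := hc
    set K : Set ℝ := Set.Ici t₀ ∩ (deriv M) ⁻¹' Set.Iic C₃ with hK
    have hKne : K.Nonempty := ⟨t₂, ht₂, hle⟩
    have hKcl : IsClosed K := (isClosed_Ici).inter (isClosed_Iic.preimage hfc)
    have hKbdd : BddBelow K := ⟨t₀, fun x hx => hx.1⟩
    have hmem : sInf K ∈ K := hKcl.csInf_mem hKne hKbdd
    set t₁ := sInf K
    have ht₁0 : t₀ ≤ t₁ := hmem.1
    have ht₁lt : t₀ < t₁ := by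
      rcases lt_or_eq_of_le ht₁0 with h | h
      · exact h
      · exfalso; have := hmem.2; rw [← h] at this; simp at this; linarith
    have hpos : ∀ s ∈ interior (Set.Icc t₀ t₁), 0 < deriv (deriv M) s := by
      intro s hs
      rw [interior_Icc] at hs
      have hsK : s ∉ K := notMem_of_lt_csInf hs.2 hKbdd
      have hsgt : C₃ < deriv M s := by
        by_contra hns; push_neg at hns
        exact hsK ⟨le_of_lt hs.1, hns⟩
      have hs0 : (0:ℝ) ≤ s := le_trans ht₀ (le_of_lt hs.1)
      have := hineq s hs0
      have habs := le_abs_self (deriv M s)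
      nlinarith
    have hmono : StrictMonoOn (deriv M) (Set.Icc t₀ t₁) :=
      strictMonoOn_of_deriv_pos (convex_Icc _ _) (hfc.continuousOn) hpos
    have := hmono (Set.left_mem_Icc.mpr (le_of_lt ht₁lt))
      (Set.right_mem_Icc.mpr (le_of_lt ht₁lt)) ht₁lt
    have := hmem.2
    simp only [Set.mem_preimage, Set.mem_Iic] at this
    linarith
  -- Step 2: linear growth contradicts boundedness
  have hgrow : ∀ y, t₀ ≤ y → C₃ * (y - t₀) ≤ M y - M t₀ := by
    intro y hy
    refine (convex_Icc t₀ y).mul_sub_le_image_sub_of_le_deriv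
      (hMd.continuous.continuousOn) (hMd.differentiableOn) ?_
      t₀ (Set.left_mem_Icc.mpr hy) y (Set.right_mem_Icc.mpr hy) hy
    intro x hx
    rw [interior_Icc] at hx
    exact le_of_lt (step1 x (le_of_lt hx.1))
  set y := t₀ + (B - M t₀ + 1) / C₃ with hy
  have hBM : M t₀ ≤ B := hB t₀ ht₀
  have hyge : t₀ ≤ y := by
    have h0 : 0 ≤ (B - M t₀ + 1) / C₃ := div_nonneg (by linarith) (le_of_lt hC₃)
    rw [hy]; linarith
  have h1 := hgrow y hyge
  have h2 := hB y (le_trans ht₀ hyge)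
  have : C₃ * (y - t₀) = B - M t₀ + 1 := by
    rw [hy]; field_simp; ring
  linarith
end

section
/- Let a, b ∈ ℝ with a > 0 and c > 0, and M : [0,∞) → ℝ be C² with M″(t) ≥ c·M(t) − b for all t ≥ 0, and suppose M is bounded. Then M(t) ≤ b/c + (M(0) − b/c)·e^{−√c·t} for all t ≥ 0. -/
theorem stmt_14 (b c : ℝ) (hc : 0 < c) (M : ℝ → ℝ) (hM : ContDiff ℝ 2 M)
    (hbdd : ∃ B, ∀ t, 0 ≤ t → |M t| ≤ B)
    (hineq : ∀ t, 0 ≤ t → c * M t - b ≤ deriv (deriv M) t) :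
    ∀ t, 0 ≤ t → M t ≤ b / c + (M 0 - b / c) * Real.exp (-Real.sqrt c * t) := by
  obtain ⟨B, hB⟩ := hbdd
  set s : ℝ := Real.sqrt c with hs
  have hs0 : 0 < s := Real.sqrt_pos.mpr hc
  have hss : s * s = c := Real.mul_self_sqrt hc.le
  have hM' := contDiff_succ_iff_deriv.mp (show ContDiff ℝ (1 + 1) M by exact_mod_cast hM)
  have hM1 : Differentiable ℝ M := hM'.1
  have hM2 : Differentiable ℝ (deriv M) := hM'.2.2.differentiable one_ne_zero
  set N : ℝ → ℝ := fun t => M t - b / c with hN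
  set v : ℝ → ℝ := fun t => deriv M t + s * N t with hv
  set g : ℝ → ℝ := fun t => Real.exp (s * t) * N t with hg
  have hdN : ∀ t, HasDerivAt N (deriv M t) t := fun t =>
    (hM1.differentiableAt.hasDerivAt).sub_const _
  have hdv : ∀ t, HasDerivAt v (deriv (deriv M) t + s * deriv M t) t := fun t =>
    (hM2.differentiableAt.hasDerivAt).add ((hdN t).const_mul s)
  have hde : ∀ (a t : ℝ), HasDerivAt (fun t => Real.exp (a * t)) (a * Real.exp (a * t)) t := by
    intro a t
    have := ((hasDerivAt_id t).const_mul a).exp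
    simpa [mul_comm] using this
  have hdg : ∀ t, HasDerivAt g (Real.exp (s * t) * v t) t := by
    intro t
    have : HasDerivAt (fun x => Real.exp (s * x) * N x) _ t := (hde s t).fun_mul (hdN t)
    convert this using 1
    simp only [hv, hN]
    ring
  set f : ℝ → ℝ := fun t => Real.exp (-s * t) * v t with hf
  have hdf : ∀ t, HasDerivAt f (Real.exp (-s * t) * (deriv (deriv M) t - (c * M t - b))) t := by
    intro t
    have : HasDerivAt (fun x => Real.exp (-s * x) * v x) _ t := (hde (-s) t).fun_mul (hdv t)
    convert this using 1
    simp only [hv, hN]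
    have hcb : c * (b / c) = b := mul_div_cancel₀ b hc.ne'
    linear_combination (Real.exp (-s * t) * (M t - b / c)) * hss - Real.exp (-s * t) * hcb
  -- Step 1 : v ≤ 0 on [0, ∞)
  have hvneg : ∀ t, 0 ≤ t → v t ≤ 0 := by
    by_contra hcon
    push_neg at hcon
    obtain ⟨t₀, ht₀, hvpos⟩ := hcon
    -- f is monotone on [0,∞)
    have hfmono : MonotoneOn f (Set.Ici (0 : ℝ)) := by
      apply monotoneOn_of_deriv_nonneg (convex_Ici 0)
      · exact fun x _ => ((hdf x).continuousAt).continuousWithinAt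
      · exact fun x _ => ((hdf x).differentiableAt).differentiableWithinAt
      · intro x hx
        rw [interior_Ici] at hx
        rw [(hdf x).deriv]
        have := hineq x (le_of_lt hx)
        exact mul_nonneg (Real.exp_pos _).le (by linarith)
    have hvlow : ∀ t, t₀ ≤ t → v t₀ * Real.exp (s * (t - t₀)) ≤ v t := by
      intro t ht
      have h1 : f t₀ ≤ f t := hfmono (by exact ht₀) (le_trans ht₀ ht) ht
      simp only [hf] at h1
      have h2 : Real.exp (-s * t₀) * v t₀ ≤ Real.exp (-s * t) * v t := h1
      have hpos : (0:ℝ) < Real.exp (-s * t) := Real.exp_pos _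
      rw [show v t₀ * Real.exp (s * (t - t₀)) = (Real.exp (-s * t₀) * v t₀) * Real.exp (s * t) by
        rw [show s * (t - t₀) = -s * t₀ + s * t by ring, Real.exp_add]; ring]
      calc (Real.exp (-s * t₀) * v t₀) * Real.exp (s * t)
          ≤ (Real.exp (-s * t) * v t) * Real.exp (s * t) := by
            apply mul_le_mul_of_nonneg_right h2 (Real.exp_pos _).le
        _ = v t := by
            rw [mul_comm (Real.exp (-s*t)) (v t), mul_assoc, ← Real.exp_add]
            simp
    -- define h t = g t - K e^{2st}
    set K : ℝ := v t₀ * Real.exp (-s * t₀) / (2 * s) with hK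
    have hK0 : 0 < K := by positivity
    set h : ℝ → ℝ := fun t => g t - K * Real.exp (2 * s * t) with hh
    have hdh : ∀ t, HasDerivAt h (Real.exp (s * t) * v t - K * (2 * s * Real.exp (2 * s * t))) t :=
      fun t => (hdg t).sub ((hde (2 * s) t).const_mul K)
    have hhmono : MonotoneOn h (Set.Ici t₀) := by
      apply monotoneOn_of_deriv_nonneg (convex_Ici t₀)
      · exact fun x _ => ((hdh x).continuousAt).continuousWithinAt
      · exact fun x _ => ((hdh x).differentiableAt).differentiableWithinAt
      · intro x hx
        rw [interior_Ici] at hx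
        rw [(hdh x).deriv]
        have h1 := hvlow x hx.le
        have hK2 : K * (2 * s) = v t₀ * Real.exp (-s * t₀) := by
          rw [hK]; field_simp
        have h2 : K * (2 * s * Real.exp (2 * s * x)) =
            Real.exp (s * x) * (v t₀ * Real.exp (s * (x - t₀))) := by
          calc K * (2 * s * Real.exp (2 * s * x)) = (K * (2 * s)) * Real.exp (2 * s * x) := by ring
            _ = v t₀ * (Real.exp (-s * t₀) * Real.exp (2 * s * x)) := by rw [hK2]; ring
            _ = v t₀ * Real.exp (s * x + s * (x - t₀)) := by
                rw [← Real.exp_add]; congr 2; ring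
            _ = Real.exp (s * x) * (v t₀ * Real.exp (s * (x - t₀))) := by
                rw [Real.exp_add]; ring
        rw [h2]
        have := mul_le_mul_of_nonneg_left h1 (Real.exp_pos (s * x)).le
        linarith
    -- so for t ≥ t₀ : N t ≥ K e^{st} - |h t₀|
    have hNlow : ∀ t, t₀ ≤ t → K * Real.exp (s * t) - |h t₀| ≤ N t := by
      intro t ht
      have h1 : h t₀ ≤ h t := hhmono (Set.self_mem_Ici) (Set.mem_Ici.mpr ht) ht
      have h2 : g t = Real.exp (s * t) * N t := rfl
      have hexp : Real.exp (-s * t) ≤ 1 := by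
        apply Real.exp_le_one_iff.mpr
        nlinarith [le_trans ht₀ ht]
      have h3 : K * Real.exp (2 * s * t) + h t₀ ≤ g t := by
        have e1 : h t = g t - K * Real.exp (2 * s * t) := rfl
        have e2 : h t₀ = g t₀ - K * Real.exp (2 * s * t₀) := rfl
        linarith
      have h4 : N t = Real.exp (-s * t) * g t := by
        rw [h2, ← mul_assoc, ← Real.exp_add]; simp
      rw [h4]
      have h5 : Real.exp (-s * t) * (K * Real.exp (2 * s * t) + h t₀) ≤ Real.exp (-s*t) * g t :=
        mul_le_mul_of_nonneg_left h3 (Real.exp_pos _).le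
      have h6 : Real.exp (-s * t) * (K * Real.exp (2 * s * t)) = K * Real.exp (s * t) := by
        rw [mul_comm (Real.exp (-s*t)), mul_assoc, ← Real.exp_add]; ring_nf
      have h7 : -|h t₀| ≤ Real.exp (-s * t) * h t₀ := by
        rcases le_or_gt 0 (h t₀) with hp | hn
        · have : 0 ≤ Real.exp (-s * t) * h t₀ := by positivity
          linarith [abs_nonneg (h t₀)]
        · have : Real.exp (-s * t) * h t₀ ≥ 1 * h t₀ := by nlinarith [Real.exp_pos (-s*t)]
          rw [abs_of_neg hn]; linarith
      nlinarith [h5, h6, h7]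
    -- derive contradiction with boundedness
    set T : ℝ := max t₀ ((B + |b / c| + |h t₀| + 1) / (K * s)) with hT
    have hTt₀ : t₀ ≤ T := le_max_left _ _
    have hT0 : 0 ≤ T := le_trans ht₀ hTt₀
    have hTb : (B + |b / c| + |h t₀| + 1) ≤ K * s * T := by
      have := le_max_right t₀ ((B + |b / c| + |h t₀| + 1) / (K * s))
      rw [div_le_iff₀ (by positivity)] at this
      linarith [this]
    have hexpT : s * T ≤ Real.exp (s * T) := by
      linarith [Real.add_one_le_exp (s * T)]
    have h1 : K * (s * T) ≤ K * Real.exp (s * T) :=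
      mul_le_mul_of_nonneg_left hexpT hK0.le
    have h2 := hNlow T hTt₀
    have hMT : B + 1 ≤ M T := by
      have h1' : K * s * T ≤ K * Real.exp (s * T) := by
        calc K * s * T = K * (s * T) := by ring
          _ ≤ K * Real.exp (s * T) := h1
      have : B + |b/c| + 1 ≤ N T := by
        calc B + |b/c| + 1 = (B + |b / c| + |h t₀| + 1) - |h t₀| := by ring
          _ ≤ K * s * T - |h t₀| := by linarith
          _ ≤ K * Real.exp (s * T) - |h t₀| := by linarith
          _ ≤ N T := h2
      simp only [hN] at this
      have hbc : -(b/c) ≤ |b/c| := neg_le_abs _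
      linarith
    have := hB T hT0
    have := le_abs_self (M T)
    linarith
  -- Step 2 : g is antitone on [0,∞)
  have hganti : AntitoneOn g (Set.Ici (0 : ℝ)) := by
    apply antitoneOn_of_deriv_nonpos (convex_Ici 0)
    · exact fun x _ => ((hdg x).continuousAt).continuousWithinAt
    · exact fun x _ => ((hdg x).differentiableAt).differentiableWithinAt
    · intro x hx
      rw [interior_Ici] at hx
      rw [(hdg x).deriv]
      have := hvneg x hx.le
      have := Real.exp_pos (s * x)
      nlinarith
  intro t ht
  have h1 : g t ≤ g 0 := hganti (Set.mem_Ici.mpr (le_refl 0)) (Set.mem_Ici.mpr ht) ht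
  simp only [hg, hN, mul_zero, Real.exp_zero, one_mul] at h1
  -- g t = exp(st)(M t - b/c) ≤ M 0 - b/c
  have h2 : M t - b / c ≤ (M 0 - b / c) * Real.exp (-s * t) := by
    have hpos : (0:ℝ) < Real.exp (s * t) := Real.exp_pos _
    have h3 : Real.exp (s * t) * (M t - b / c) ≤ M 0 - b / c := h1
    have := mul_le_mul_of_nonneg_right h3 (Real.exp_pos (-s * t)).le
    rw [mul_comm (Real.exp (s*t)) _, mul_assoc, ← Real.exp_add] at this
    simpa using this
  linarith
end
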